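/- Let R be a commutative ring, M an R-module, a ∈ R, and (φ_n)_{n≥0} a sequence of R-linear endomorphisms of M with φ_0 = id_M. Then the following are equivalent: (1) for every n ≥ 0 and every r ≥ 1 one has Σ_{l,m,k ≥ 0, l+m+k = r} (−1)^l · c(l+n, k) · k! · binom(l+m, l) · binom(l+m+k, k) · a^k · (φ_m ∘ φ_{l+n}) = 0 in End_R(M); (2) for every n ≥ 1, φ_n = ∏_{i=0}^{n-1}(φ_1 − i·a). -/

import Mathlib

set_option linter.unusedSectionVars false
set_option maxHeartbeats 1000000

def cCoeff (s k : ℕ) : ℤ :=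
  if s = 0 then (if k = 0 then 1 else 0) else (-1) ^ k * ((s + k - 1).choose k : ℤ)

namespace Stmt0
open Finset Finset.Nat

def qc (s k : ℕ) : ℚ := (cCoeff s k : ℚ)

def qcm (s : ℕ) : ℕ → ℚ
  | 0 => 0
  | k + 1 => qc s k

lemma qcm_zero (s : ℕ) : qcm s 0 = 0 := rfl
lemma qcm_succ (s k : ℕ) : qcm s (k + 1) = qc s k := rfl

lemma qc_zero (s : ℕ) : qc s 0 = 1 := by
  rcases s with _ | s <;> simp [qc, cCoeff]

lemma qc_zero_succ (k : ℕ) : qc 0 (k + 1) = 0 := by simp [qc, cCoeff]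

lemma qc_succ (s m : ℕ) : qc (s + 1) m = (-1 : ℚ) ^ m * ((s + m).choose m : ℚ) := by
  have h : s + 1 + m - 1 = s + m := by omega
  simp [qc, cCoeff, h]

lemma qc_pascal (s k : ℕ) : qc (s + 1) (k + 1) + qc (s + 1) k = qc s (k + 1) := by
  rcases s with _ | s
  · rw [qc_succ, qc_succ, qc_zero_succ]
    simp [pow_succ]
  · rw [qc_succ, qc_succ, qc_succ]
    have h1 : s + 1 + (k + 1) = (s + k + 1) + 1 := by omega
    have h2 : s + 1 + k = s + k + 1 := by omega
    rw [h1, h2, Nat.choose_succ_succ (s + k + 1) k]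
    have h3 : s + (k + 1) = s + k + 1 := by omega
    rw [h3]
    push_cast
    ring

lemma qcm_eq (s k : ℕ) : qcm (s + 1) k = qc s k - qc (s + 1) k := by
  cases k with
  | zero => simp [qcm_zero, qc_zero]
  | succ k => rw [qcm_succ, ← qc_pascal s k]; ring

private lemma aux (s k : ℕ) (C1 C2 : ℚ) (hq : C1 * (k + 1) = C2 * (s + 1)) :
    ((k : ℚ) + 1) * ((-1 : ℚ) ^ (k + 1) * C1) = -(((s : ℕ) + 1 : ℕ) : ℚ) * ((-1 : ℚ) ^ k * C2) := by
  push_cast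
  linear_combination ((-1 : ℚ)) ^ (k + 1) * hq

lemma qc_rec (s k : ℕ) : ((k : ℚ) + 1) * qc s (k + 1) = -(s : ℚ) * qc (s + 1) k := by
  rcases s with _ | s
  · simp [qc, cCoeff]
  · rw [qc_succ, qc_succ]
    have h2 : s + 1 + k = s + k + 1 := by omega
    rw [h2]
    refine aux s k _ _ ?_
    have h := Nat.choose_succ_right_eq (s + k + 1) k
    have h3 : s + k + 1 - k = s + 1 := by omega
    rw [h3] at h
    exact_mod_cast congrArg (Nat.cast : ℕ → ℚ) h

section Alg
variable {A : Type*} [CommRing A] [Algebra ℚ A]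

def Pp (x y : A) (j : ℕ) : A := ∏ i ∈ Finset.range j, (y - (i : A) * x)

lemma Pp_zero (x y : A) : Pp x y 0 = 1 := by simp [Pp]

lemma Pp_succ (x y : A) (j : ℕ) : Pp x y (j + 1) = (y - (j : A) * x) * Pp x y j := by
  rw [Pp, Finset.prod_range_succ, mul_comm]; rfl

def sum3 (m : ℕ) (f : ℕ → ℕ → ℕ → A) : A :=
  ∑ p ∈ antidiagonal m, ∑ q ∈ antidiagonal p.2, f p.1 q.1 q.2

lemma sum3_congr {m : ℕ} {f g : ℕ → ℕ → ℕ → A}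
    (h : ∀ l j k, l + j + k = m → f l j k = g l j k) : sum3 m f = sum3 m g := by
  refine Finset.sum_congr rfl fun p hp => Finset.sum_congr rfl fun q hq => ?_
  have h1 := mem_antidiagonal.mp hp
  have h2 := mem_antidiagonal.mp hq
  exact h _ _ _ (by omega)

lemma sum3_add (m : ℕ) (f g : ℕ → ℕ → ℕ → A) :
    sum3 m (fun l j k => f l j k + g l j k) = sum3 m f + sum3 m g := by
  simp [sum3, Finset.sum_add_distrib]

lemma sum3_sub (m : ℕ) (f g : ℕ → ℕ → ℕ → A) :
    sum3 m (fun l j k => f l j k - g l j k) = sum3 m f - sum3 m g := by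
  simp [sum3, Finset.sum_sub_distrib]

lemma sum3_neg (m : ℕ) (f : ℕ → ℕ → ℕ → A) :
    sum3 m (fun l j k => -(f l j k)) = -sum3 m f := by
  simp [sum3]

lemma sum3_mul_left (m : ℕ) (c : A) (f : ℕ → ℕ → ℕ → A) :
    sum3 m (fun l j k => c * f l j k) = c * sum3 m f := by
  simp [sum3, Finset.mul_sum]

lemma sum3_zero_eval (f : ℕ → ℕ → ℕ → A) : sum3 0 f = f 0 0 0 := by simp [sum3]

lemma sum3_shiftL {m : ℕ} {f : ℕ → ℕ → ℕ → A} (h : ∀ j k, f 0 j k = 0) :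
    sum3 (m + 1) f = sum3 m (fun l j k => f (l + 1) j k) := by
  unfold sum3
  rw [sum_antidiagonal_succ (f := fun p : ℕ × ℕ => ∑ q ∈ antidiagonal p.2, f p.1 q.1 q.2)]
  have : (∑ q ∈ antidiagonal (((0 : ℕ), m + 1) : ℕ × ℕ).2, f (0, m+1).1 q.1 q.2) = 0 :=
    Finset.sum_eq_zero fun q _ => h _ _
  rw [this, zero_add]

lemma sum3_shiftJ {m : ℕ} {f : ℕ → ℕ → ℕ → A} (h : ∀ l k, f l 0 k = 0) :
    sum3 (m + 1) f = sum3 m (fun l j k => f l (j + 1) k) := by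
  unfold sum3
  rw [sum_antidiagonal_succ' (f := fun p : ℕ × ℕ => ∑ q ∈ antidiagonal p.2, f p.1 q.1 q.2)]
  have h0 : (∑ q ∈ antidiagonal (((m + 1 : ℕ), (0 : ℕ)) : ℕ × ℕ).2, f (m+1, 0).1 q.1 q.2) = 0 := by
    simp [antidiagonal_zero, h]
  rw [h0, zero_add]
  refine Finset.sum_congr rfl fun p hp => ?_
  rw [sum_antidiagonal_succ (f := fun q : ℕ × ℕ => f p.1 q.1 q.2)]
  rw [h, zero_add]

lemma sum3_shiftK {m : ℕ} {f : ℕ → ℕ → ℕ → A} (h : ∀ l j, f l j 0 = 0) :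
    sum3 (m + 1) f = sum3 m (fun l j k => f l j (k + 1)) := by
  unfold sum3
  rw [sum_antidiagonal_succ' (f := fun p : ℕ × ℕ => ∑ q ∈ antidiagonal p.2, f p.1 q.1 q.2)]
  have h0 : (∑ q ∈ antidiagonal (((m + 1 : ℕ), (0 : ℕ)) : ℕ × ℕ).2, f (m+1, 0).1 q.1 q.2) = 0 := by
    simp [antidiagonal_zero, h]
  rw [h0, zero_add]
  refine Finset.sum_congr rfl fun p hp => ?_
  rw [sum_antidiagonal_succ' (f := fun q : ℕ × ℕ => f p.1 q.1 q.2)]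
  rw [h, zero_add]

def ffn (x y : A) (n l j k : ℕ) : A :=
  algebraMap ℚ A ((-1) ^ l * qc (l + n) k / (l.factorial * j.factorial)) *
    (x ^ k * (Pp x y j * Pp x y (l + n)))

def ww1 (x y : A) (n l j k : ℕ) : A :=
  algebraMap ℚ A ((-1) ^ l / (l.factorial * j.factorial) * qcm (l + n + 1) k) *
    (y * (x ^ k * (Pp x y j * Pp x y (l + n))))

def ww2 (x y : A) (n l j k : ℕ) : A :=
  algebraMap ℚ A ((-1) ^ l * qc (l + n) k * j / (l.factorial * j.factorial)) *
    (x ^ (k + 1) * (Pp x y j * Pp x y (l + n)))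

def wwn (x y : A) (n l j k : ℕ) : A := ww1 x y n l j k - ww2 x y n l j k

lemma w_pt (x y : A) (n l j k : ℕ) :
    algebraMap ℚ A ((l + 1 : ℕ) : ℚ) * ffn x y n (l + 1) j k
      + algebraMap ℚ A ((j + 1 : ℕ) : ℚ) * ffn x y n l (j + 1) k
      + algebraMap ℚ A ((k + 1 : ℕ) : ℚ) * ffn x y n l j (k + 1)
    = wwn x y n l j k := by
  have hl : (l.factorial : ℚ) ≠ 0 := Nat.cast_ne_zero.mpr (Nat.factorial_ne_zero _)
  have hj : (j.factorial : ℚ) ≠ 0 := Nat.cast_ne_zero.mpr (Nat.factorial_ne_zero _)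
  have e1 : l + 1 + n = l + n + 1 := by omega
  unfold ffn wwn ww1 ww2
  rw [e1, Pp_succ, Pp_succ, qcm_eq]
  have sA : algebraMap ℚ A ((l + 1 : ℕ) : ℚ) *
      algebraMap ℚ A ((-1) ^ (l + 1) * qc (l + n + 1) k / ((l + 1).factorial * j.factorial)) =
      -(algebraMap ℚ A ((-1) ^ l * qc (l + n + 1) k / (l.factorial * j.factorial))) := by
    rw [← map_mul, ← map_neg]
    congr 1
    have h1 : ((l + 1).factorial : ℚ) = (l + 1) * l.factorial := by
      rw [Nat.factorial_succ]; push_cast; ring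
    rw [h1]
    have hl1 : ((l : ℚ) + 1) ≠ 0 := by positivity
    field_simp
    push_cast
    ring
  have sB : algebraMap ℚ A ((j + 1 : ℕ) : ℚ) *
      algebraMap ℚ A ((-1) ^ l * qc (l + n) k / (l.factorial * (j + 1).factorial)) =
      algebraMap ℚ A ((-1) ^ l * qc (l + n) k / (l.factorial * j.factorial)) := by
    rw [← map_mul]
    congr 1
    have h1 : ((j + 1).factorial : ℚ) = (j + 1) * j.factorial := by
      rw [Nat.factorial_succ]; push_cast; ring
    rw [h1]
    have hj1 : ((j : ℚ) + 1) ≠ 0 := by positivity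
    field_simp
    push_cast
    ring
  have sC : algebraMap ℚ A ((k + 1 : ℕ) : ℚ) *
      algebraMap ℚ A ((-1) ^ l * qc (l + n) (k + 1) / (l.factorial * j.factorial)) =
      -(algebraMap ℚ A ((-1) ^ l * qc (l + n + 1) k / (l.factorial * j.factorial)) *
        ((l + n : ℕ) : A)) := by
    rw [← map_natCast (algebraMap ℚ A) (l + n), ← map_mul, ← map_mul, ← map_neg]
    congr 1
    have h := qc_rec (l + n) k
    push_cast at h ⊢
    field_simp
    linear_combination h
  have sD : algebraMap ℚ A ((-1) ^ l / (l.factorial * j.factorial) * (qc (l + n) k - qc (l + n + 1) k)) =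
      algebraMap ℚ A ((-1) ^ l * qc (l + n) k / (l.factorial * j.factorial)) -
      algebraMap ℚ A ((-1) ^ l * qc (l + n + 1) k / (l.factorial * j.factorial)) := by
    rw [← map_sub]; congr 1; ring
  have sE : algebraMap ℚ A ((-1) ^ l * qc (l + n) k * j / (l.factorial * j.factorial)) =
      algebraMap ℚ A ((-1) ^ l * qc (l + n) k / (l.factorial * j.factorial)) * ((j : ℕ) : A) := by
    rw [← map_natCast (algebraMap ℚ A) j, ← map_mul]
    congr 1; ring
  simp only [← mul_assoc]
  rw [sA, sB, sC, sD, sE]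
  ring

lemma v_pt (x y : A) (n l j k : ℕ) :
    ww1 x y n l j (k + 1) - ww2 x y n l (j + 1) k = -(x * wwn x y n l j k) := by
  have hl : (l.factorial : ℚ) ≠ 0 := Nat.cast_ne_zero.mpr (Nat.factorial_ne_zero _)
  have hj : (j.factorial : ℚ) ≠ 0 := Nat.cast_ne_zero.mpr (Nat.factorial_ne_zero _)
  unfold wwn ww1 ww2
  rw [Pp_succ]
  rw [qcm_succ, qcm_eq]
  have s1 : algebraMap ℚ A ((-1) ^ l / (l.factorial * j.factorial) * qc (l + n + 1) k) =
      algebraMap ℚ A ((-1) ^ l * qc (l + n + 1) k / (l.factorial * j.factorial)) := by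
    congr 1; ring
  rw [s1]
  have sB : algebraMap ℚ A ((-1) ^ l * qc (l + n) k * ((j + 1 : ℕ) : ℚ) / (l.factorial * (j + 1).factorial)) =
      algebraMap ℚ A ((-1) ^ l * qc (l + n) k / (l.factorial * j.factorial)) := by
    congr 1
    have h1 : ((j + 1).factorial : ℚ) = (j + 1) * j.factorial := by
      rw [Nat.factorial_succ]; push_cast; ring
    rw [h1]
    have hj1 : ((j : ℚ) + 1) ≠ 0 := by positivity
    field_simp
    push_cast
    ring
  have sD : algebraMap ℚ A ((-1) ^ l / (l.factorial * j.factorial) * (qc (l + n) k - qc (l + n + 1) k)) =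
      algebraMap ℚ A ((-1) ^ l * qc (l + n) k / (l.factorial * j.factorial)) -
      algebraMap ℚ A ((-1) ^ l * qc (l + n + 1) k / (l.factorial * j.factorial)) := by
    rw [← map_sub]; congr 1; ring
  have sE : algebraMap ℚ A ((-1) ^ l * qc (l + n) k * j / (l.factorial * j.factorial)) =
      algebraMap ℚ A ((-1) ^ l * qc (l + n) k / (l.factorial * j.factorial)) * ((j : ℕ) : A) := by
    rw [← map_natCast (algebraMap ℚ A) j, ← map_mul]
    congr 1; ring
  rw [sB, sD, sE]
  ring

lemma ww_zero (x y : A) (n : ℕ) : ∀ m, sum3 m (wwn x y n) = 0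
  | 0 => by
      rw [sum3_zero_eval]
      show ww1 x y n 0 0 0 - ww2 x y n 0 0 0 = 0
      unfold ww1 ww2
      simp [qcm_zero]
  | (m + 1) => by
      have h1 : sum3 (m + 1) (ww1 x y n) = sum3 m (fun l j k => ww1 x y n l j (k + 1)) :=
        sum3_shiftK (fun l j => by simp [ww1, qcm_zero])
      have h2 : sum3 (m + 1) (ww2 x y n) = sum3 m (fun l j k => ww2 x y n l (j + 1) k) :=
        sum3_shiftJ (fun l k => by simp [ww2])
      have e0 : sum3 (m + 1) (wwn x y n) = sum3 (m + 1) (ww1 x y n) - sum3 (m + 1) (ww2 x y n) := by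
        rw [← sum3_sub]; rfl
      rw [e0, h1, h2, ← sum3_sub]
      have e1 : sum3 m (fun l j k => ww1 x y n l j (k + 1) - ww2 x y n l (j + 1) k) =
          sum3 m (fun l j k => -(x * wwn x y n l j k)) :=
        sum3_congr (fun l j k _ => v_pt x y n l j k)
      rw [e1, sum3_neg (f := fun l j k => x * wwn x y n l j k), sum3_mul_left,
        ww_zero x y n m]
      simp

lemma main_rec (x y : A) (n m : ℕ) :
    sum3 (m + 1) (fun l j k => algebraMap ℚ A ((m + 1 : ℕ) : ℚ) * ffn x y n l j k) =
      sum3 m (wwn x y n) := by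
  have step1 : sum3 (m + 1) (fun l j k => algebraMap ℚ A ((m + 1 : ℕ) : ℚ) * ffn x y n l j k)
      = sum3 (m + 1) (fun l j k =>
          (algebraMap ℚ A (l : ℚ) * ffn x y n l j k + algebraMap ℚ A (j : ℚ) * ffn x y n l j k)
            + algebraMap ℚ A (k : ℚ) * ffn x y n l j k) := by
    refine sum3_congr fun l j k h => ?_
    have hc : ((m + 1 : ℕ) : ℚ) = (l : ℚ) + (j : ℚ) + (k : ℚ) := by
      rw [← h]; push_cast; ring
    rw [hc, map_add, map_add, add_mul, add_mul]
  rw [step1, sum3_add, sum3_add]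
  rw [sum3_shiftL (f := fun l j k => algebraMap ℚ A (l : ℚ) * ffn x y n l j k)
        (by intro j k; simp),
      sum3_shiftJ (f := fun l j k => algebraMap ℚ A (j : ℚ) * ffn x y n l j k)
        (by intro l k; simp),
      sum3_shiftK (f := fun l j k => algebraMap ℚ A (k : ℚ) * ffn x y n l j k)
        (by intro l j; simp)]
  rw [← sum3_add, ← sum3_add]
  exact sum3_congr fun l j k _ => w_pt x y n l j k

lemma S_zero (x y : A) (n r : ℕ) (hr : 1 ≤ r) : sum3 r (ffn x y n) = 0 := by
  obtain ⟨m, rfl⟩ : ∃ m, r = m + 1 := ⟨r - 1, by omega⟩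
  have h := main_rec x y n m
  rw [ww_zero, sum3_mul_left] at h
  have hc : ((m + 1 : ℕ) : ℚ) ≠ 0 := Nat.cast_ne_zero.mpr (by omega)
  calc sum3 (m + 1) (ffn x y n)
      = algebraMap ℚ A (((m + 1 : ℕ) : ℚ)⁻¹ * ((m + 1 : ℕ) : ℚ)) * sum3 (m + 1) (ffn x y n) := by
        rw [inv_mul_cancel₀ hc, map_one, one_mul]
    _ = algebraMap ℚ A (((m + 1 : ℕ) : ℚ)⁻¹) *
          (algebraMap ℚ A ((m + 1 : ℕ) : ℚ) * sum3 (m + 1) (ffn x y n)) := by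
        rw [map_mul, mul_assoc]
    _ = 0 := by rw [h, mul_zero]

end Alg

lemma coef_eq (n l j k : ℕ) :
    (((-1 : ℤ) ^ l * cCoeff (l + n) k * (k.factorial : ℤ) * ((l + j).choose l : ℤ) *
        ((l + j + k).choose k : ℤ) : ℤ) : ℚ) =
    ((l + j + k).factorial : ℚ) * ((-1) ^ l * qc (l + n) k / (l.factorial * j.factorial)) := by
  have hl : (l.factorial : ℚ) ≠ 0 := Nat.cast_ne_zero.mpr (Nat.factorial_ne_zero _)
  have hj : (j.factorial : ℚ) ≠ 0 := Nat.cast_ne_zero.mpr (Nat.factorial_ne_zero _)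
  have h1 : (l + j).choose l * l.factorial * j.factorial = (l + j).factorial := by
    have := Nat.choose_mul_factorial_mul_factorial (Nat.le_add_right l j)
    simpa using this
  have h2 : (l + j + k).choose k * k.factorial * (l + j).factorial = (l + j + k).factorial := by
    have := Nat.choose_mul_factorial_mul_factorial (Nat.le_add_left k (l + j))
    simpa using this
  have q1 : ((l + j).choose l : ℚ) * l.factorial * j.factorial = (l + j).factorial := by
    exact_mod_cast congrArg (Nat.cast : ℕ → ℚ) h1
  have q2 : ((l + j + k).choose k : ℚ) * k.factorial * (l + j).factorial = (l + j + k).factorial := by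
    exact_mod_cast congrArg (Nat.cast : ℕ → ℚ) h2
  rw [qc]
  push_cast
  field_simp
  linear_combination ((cCoeff (l + n) k : ℚ) * (k.factorial : ℚ) *
      ((l + j + k).choose k : ℚ)) * q1 + ((cCoeff (l + n) k : ℚ)) * q2

section Alg2
variable {A : Type*} [CommRing A] [Algebra ℚ A]

lemma key_rat (x y : A) (n r : ℕ) (hr : 1 ≤ r) :
    ∑ l ∈ Finset.range (r + 1), ∑ j ∈ Finset.range (r + 1 - l),
      ((-1 : ℤ) ^ l * cCoeff (l + n) (r - l - j) * ((r - l - j).factorial : ℤ) *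
          ((l + j).choose l : ℤ) * ((l + j + (r - l - j)).choose (r - l - j) : ℤ)) •
        (x ^ (r - l - j) * (Pp x y j * Pp x y (l + n))) = 0 := by
  have hconv : (∑ l ∈ Finset.range (r + 1), ∑ j ∈ Finset.range (r + 1 - l),
      ((-1 : ℤ) ^ l * cCoeff (l + n) (r - l - j) * ((r - l - j).factorial : ℤ) *
          ((l + j).choose l : ℤ) * ((l + j + (r - l - j)).choose (r - l - j) : ℤ)) •
        (x ^ (r - l - j) * (Pp x y j * Pp x y (l + n))))
      = sum3 r (fun l j k =>
          ((-1 : ℤ) ^ l * cCoeff (l + n) k * (k.factorial : ℤ) * ((l + j).choose l : ℤ) *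
            ((l + j + k).choose k : ℤ)) • (x ^ k * (Pp x y j * Pp x y (l + n)))) := by
    rw [sum3, sum_antidiagonal_eq_sum_range_succ_mk]
    refine Finset.sum_congr rfl fun l hl => ?_
    have hlr : l ≤ r := by
      have := Finset.mem_range.mp hl; omega
    rw [sum_antidiagonal_eq_sum_range_succ_mk]
    have : r + 1 - l = (r - l) + 1 := by omega
    rw [this]
  rw [hconv]
  have hstep : sum3 r (fun l j k =>
      ((-1 : ℤ) ^ l * cCoeff (l + n) k * (k.factorial : ℤ) * ((l + j).choose l : ℤ) *
        ((l + j + k).choose k : ℤ)) • (x ^ k * (Pp x y j * Pp x y (l + n))))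
      = sum3 r (fun l j k => algebraMap ℚ A (r.factorial : ℚ) * ffn x y n l j k) := by
    refine sum3_congr fun l j k h => ?_
    subst h
    have e2 : algebraMap ℚ A (((l + j + k).factorial : ℕ) : ℚ) * ffn x y n l j k
        = algebraMap ℚ A ((((l + j + k).factorial : ℕ) : ℚ) *
            ((-1) ^ l * qc (l + n) k / (l.factorial * j.factorial))) *
          (x ^ k * (Pp x y j * Pp x y (l + n))) := by
      rw [ffn, map_mul, mul_assoc]
    rw [e2, zsmul_eq_mul, ← map_intCast (algebraMap ℚ A), ← coef_eq n l j k]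
  rw [hstep, sum3_mul_left, S_zero x y n r hr, mul_zero]

end Alg2

section Transfer
open Polynomial

lemma Pp_map {A B : Type*} [CommRing A] [CommRing B] (f : A →+* B) (x y : A) (j : ℕ) :
    f (Pp x y j) = Pp (f x) (f y) j := by
  simp [Pp, map_prod, map_sub, map_natCast]

lemma Pp_list {A : Type*} [CommRing A] (x y : A) (j : ℕ) :
    Pp x y j = ((List.range j).map (fun i : ℕ => y - (i : A) * x)).prod := by
  induction j with
  | zero => simp [Pp]
  | succ m ih =>
      rw [Pp, Finset.prod_range_succ, ← Pp, ih, List.range_succ, List.map_append,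
        List.prod_append]
      simp

lemma key_int (n r : ℕ) (hr : 1 ≤ r) :
    ∑ l ∈ Finset.range (r + 1), ∑ j ∈ Finset.range (r + 1 - l),
      ((-1 : ℤ) ^ l * cCoeff (l + n) (r - l - j) * ((r - l - j).factorial : ℤ) *
          ((l + j).choose l : ℤ) * ((l + j + (r - l - j)).choose (r - l - j) : ℤ)) •
        ((Polynomial.C Polynomial.X : Polynomial (Polynomial ℤ)) ^ (r - l - j) *
          (Pp (Polynomial.C Polynomial.X : Polynomial (Polynomial ℤ))
              (Polynomial.X : Polynomial (Polynomial ℤ)) j *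
           Pp (Polynomial.C Polynomial.X : Polynomial (Polynomial ℤ))
              (Polynomial.X : Polynomial (Polynomial ℤ)) (l + n))) = 0 := by
  have hinj : Function.Injective
      (Polynomial.mapRingHom (Polynomial.mapRingHom (Int.castRingHom ℚ)) :
        Polynomial (Polynomial ℤ) →+* Polynomial (Polynomial ℚ)) :=
    Polynomial.map_injective _ (Polynomial.map_injective _ Int.cast_injective)
  apply hinj
  rw [map_zero, map_sum]
  have hx : (Polynomial.mapRingHom (Polynomial.mapRingHom (Int.castRingHom ℚ)))
      (Polynomial.C Polynomial.X : Polynomial (Polynomial ℤ)) =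
      (Polynomial.C Polynomial.X : Polynomial (Polynomial ℚ)) := by
    simp only [Polynomial.coe_mapRingHom, Polynomial.map_C, Polynomial.map_X]
  have hy : (Polynomial.mapRingHom (Polynomial.mapRingHom (Int.castRingHom ℚ)))
      (Polynomial.X : Polynomial (Polynomial ℤ)) = Polynomial.X := by
    simp only [Polynomial.coe_mapRingHom, Polynomial.map_X]
  refine Eq.trans ?_ (key_rat (Polynomial.C Polynomial.X : Polynomial (Polynomial ℚ))
    Polynomial.X n r hr)
  refine Finset.sum_congr rfl fun l _ => ?_
  rw [map_sum]
  refine Finset.sum_congr rfl fun j _ => ?_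
  rw [map_zsmul, map_mul, map_pow, map_mul, Pp_map, Pp_map, hx, hy]

end Transfer

section EndSec
variable {R M : Type*} [CommRing R] [AddCommGroup M] [Module R M]

noncomputable def gHom (α : Module.End R M) : Polynomial ℤ →+* Module.End R M :=
  Polynomial.eval₂RingHom' (Int.castRingHom _) α (fun z => Int.cast_commute z α)

lemma gHom_C (α : Module.End R M) (z : ℤ) : gHom α (Polynomial.C z) = (z : Module.End R M) := by
  simp [gHom]

lemma gHom_X (α : Module.End R M) : gHom α Polynomial.X = α := by
  simp [gHom]

lemma gHom_commute (a : R) (ψ : Module.End R M) (p : Polynomial ℤ) :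
    Commute (gHom (a • 1) p) ψ := by
  have hαψ : Commute (a • (1 : Module.End R M)) ψ := (Commute.one_left ψ).smul_left a
  induction p using Polynomial.induction_on with
  | C z => simpa [gHom_C] using Int.cast_commute z ψ
  | add p q hp hq => rw [map_add]; exact hp.add_left hq
  | monomial m z ih =>
      rw [map_mul, map_pow, gHom_C, gHom_X]
      exact (Int.cast_commute z ψ).mul_left (hαψ.pow_left (m + 1))

noncomputable def evHom (a : R) (ψ : Module.End R M) :
    Polynomial (Polynomial ℤ) →+* Module.End R M :=
  Polynomial.eval₂RingHom' (gHom (a • 1)) ψ (gHom_commute a ψ)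

lemma evHom_C (a : R) (ψ : Module.End R M) (p : Polynomial ℤ) :
    evHom a ψ (Polynomial.C p) = gHom (a • 1) p :=
  Polynomial.eval₂_C _ _

lemma evHom_X (a : R) (ψ : Module.End R M) : evHom a ψ Polynomial.X = ψ :=
  Polynomial.eval₂_X _ _

lemma evHom_x (a : R) (ψ : Module.End R M) :
    evHom a ψ (Polynomial.C Polynomial.X) = a • 1 := by
  rw [evHom_C, gHom_X]

lemma cast_mul_scalar (a : R) (i : ℕ) :
    ((i : ℕ) : Module.End R M) * (a • 1) = (((i : R)) * a) • (1 : Module.End R M) := by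
  have h1 : ((i : ℕ) : Module.End R M) = (i : R) • (1 : Module.End R M) := by
    rw [← map_natCast (algebraMap R (Module.End R M)) i, Algebra.algebraMap_eq_smul_one]
  rw [h1, smul_mul_smul_comm, mul_one]

end EndSec


lemma cCoeff_zero' (s : ℕ) : cCoeff s 0 = 1 := by rcases s with _ | s <;> simp [cCoeff]

lemma cCoeff_one' (n : ℕ) : cCoeff n 1 = -(n : ℤ) := by
  rcases n with _ | n
  · simp [cCoeff]
  · simp [cCoeff]

end Stmt0

/-- the cocycle condition in coefficientwise form is equivalent to
`φ n = ∏_{i=0}^{n-1} (φ 1 - i·a)`. -/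
theorem statement0 {R M : Type*} [CommRing R] [AddCommGroup M] [Module R M]
    (a : R) (φ : ℕ → Module.End R M) (hφ0 : φ 0 = 1) :
    (∀ n r : ℕ, 1 ≤ r →
        ∑ l ∈ Finset.range (r + 1), ∑ j ∈ Finset.range (r + 1 - l),
          ((-1 : ℤ) ^ l * cCoeff (l + n) (r - l - j) * ((r - l - j).factorial : ℤ) *
              ((l + j).choose l : ℤ) * ((l + j + (r - l - j)).choose (r - l - j) : ℤ)) •
            (a ^ (r - l - j) • (φ j * φ (l + n))) = 0) ↔
      (∀ n : ℕ, 1 ≤ n →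
        φ n = ((List.range n).map (fun i => φ 1 - (((i : ℕ) : R) * a) • 1)).prod) := by
  have base : ∀ c c' : R,
      Commute (φ 1 - c • (1 : Module.End R M)) (φ 1 - c' • (1 : Module.End R M)) := by
    intro c c'
    exact ((Commute.refl (φ 1)).sub_right ((Commute.one_right (φ 1)).smul_right c')).sub_left
      ((Commute.one_left (φ 1 - c' • 1)).smul_left c)
  constructor
  · -- (1) → (2)
    intro H
    have hrec : ∀ m : ℕ, φ (m + 1) = (φ 1 - ((m : R) * a) • 1) * φ m := by
      intro m
      have h := H m 1 le_rfl
      norm_num [Finset.sum_range_succ, hφ0, Stmt0.cCoeff_zero', Stmt0.cCoeff_one'] at h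
      have e1 : ((m : ℕ) : Module.End R M) = (m : R) • 1 := by
        rw [← map_natCast (algebraMap R (Module.End R M)) m, Algebra.algebraMap_eq_smul_one]
      rw [e1] at h
      rw [show 1 + m = m + 1 from by omega] at h
      simp only [smul_mul_assoc, one_mul, neg_smul, smul_neg, smul_smul] at h ⊢
      rw [sub_mul, smul_mul_assoc, one_mul]
      rw [mul_comm a ((m : R))] at h
      have h2 := add_neg_eq_zero.mp h
      rw [← h2]
      abel
    have claim : ∀ m : ℕ,
        φ m = ((List.range m).map (fun i => φ 1 - (((i : ℕ) : R) * a) • 1)).prod := by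
      intro m
      induction m with
      | zero => simpa using hφ0
      | succ m ih =>
          rw [hrec m, ih, List.range_succ, List.map_append, List.prod_append]
          simp only [List.map_cons, List.map_nil, List.prod_cons, List.prod_nil, mul_one]
          exact (Commute.list_prod_right
            ((List.range m).map (fun i => φ 1 - (((i : ℕ) : R) * a) • 1))
            (φ 1 - ((m : R) * a) • 1)
            (fun z hz => by
              obtain ⟨i, _, rfl⟩ := List.mem_map.mp hz
              exact base _ _)).eq
    exact fun n _ => claim n
  · -- (2) → (1)
    intro H n r hr
    have hφ : ∀ j : ℕ,
        φ j = ((List.range j).map (fun i => φ 1 - (((i : ℕ) : R) * a) • 1)).prod := by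
      intro j
      cases j with
      | zero => simpa using hφ0
      | succ m => exact H (m + 1) (by omega)
    have evP : ∀ j : ℕ,
        (Stmt0.evHom a (φ 1)) (Stmt0.Pp (Polynomial.C Polynomial.X) Polynomial.X j) = φ j := by
      intro j
      rw [Stmt0.Pp_list, map_list_prod, List.map_map, hφ j]
      congr 1
      refine List.map_congr_left fun i _ => ?_
      simp only [Function.comp]
      rw [map_sub, map_mul, map_natCast, Stmt0.evHom_X, Stmt0.evHom_x, Stmt0.cast_mul_scalar]
    have hkey := congrArg (Stmt0.evHom a (φ 1)) (Stmt0.key_int n r hr)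
    rw [map_zero, map_sum] at hkey
    refine Eq.trans ?_ hkey
    refine Finset.sum_congr rfl fun l _ => ?_
    rw [map_sum]
    refine Finset.sum_congr rfl fun j _ => ?_
    rw [map_zsmul, map_mul, map_pow, map_mul, Stmt0.evHom_x, evP, evP]
    rw [smul_pow, one_pow, smul_mul_assoc, one_mul]
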